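/- Let T_k denote the k-th Chebyshev polynomial of the first kind, and let B and E be symmetric real d×d matrices with ‖B‖₂ ≤ 1 and ‖B+E‖₂ ≤ 1 (spectral norms). Then for every k ≥ 0, ‖T_k(B+E) − T_k(B)‖_F ≤ k² ‖E‖_F, where ‖·‖_F is the Frobenius norm. -/

import Mathlib

open Matrix Polynomial

/-- Frobenius norm of a real matrix. -/
noncomputable def frobNorm {m n : ℕ} (A : Matrix (Fin m) (Fin n) ℝ) : ℝ :=
  Real.sqrt (∑ i, ∑ j, (A i j) ^ 2)

/-- Spectral (ℓ²-operator) norm of a real matrix. -/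
noncomputable def specNorm {m n : ℕ} (A : Matrix (Fin m) (Fin n) ℝ) : ℝ :=
  ‖LinearMap.toContinuousLinearMap (Matrix.toEuclideanLin A)‖

/-- Evaluation of the `k`-th Chebyshev polynomial of the first kind at a matrix. -/
noncomputable def chebT {d : ℕ} (k : ℕ) (A : Matrix (Fin d) (Fin d) ℝ) :
    Matrix (Fin d) (Fin d) ℝ :=
  Polynomial.aeval A (Polynomial.Chebyshev.T ℝ k)


lemma abs_sin_nat_mul_le (k : ℕ) (t : ℝ) : |Real.sin (k * t)| ≤ k * |Real.sin t| := by
  induction k with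
  | zero => simp
  | succ n ih =>
    push_cast
    rw [add_mul, one_mul, Real.sin_add]
    calc |Real.sin (n * t) * Real.cos t + Real.cos (n * t) * Real.sin t|
        ≤ |Real.sin (n * t) * Real.cos t| + |Real.cos (n * t) * Real.sin t| := abs_add_le _ _
      _ ≤ |Real.sin (n * t)| * 1 + 1 * |Real.sin t| := by
          rw [abs_mul, abs_mul]
          gcongr
          · exact Real.abs_cos_le_one t
          · exact Real.abs_cos_le_one (n*t)
      _ ≤ (n:ℝ) * |Real.sin t| * 1 + 1 * |Real.sin t| := by gcongr
      _ = (n + 1) * |Real.sin t| := by ring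

lemma cos_nat_lipschitz (k : ℕ) (θ φ : ℝ) :
    |Real.cos (k * θ) - Real.cos (k * φ)| ≤ (k:ℝ)^2 * |Real.cos θ - Real.cos φ| := by
  rw [Real.cos_sub_cos, Real.cos_sub_cos (x := θ)]
  have h1 : ((k:ℝ) * θ + k * φ) / 2 = k * ((θ + φ)/2) := by ring
  have h2 : ((k:ℝ) * θ - k * φ) / 2 = k * ((θ - φ)/2) := by ring
  rw [h1, h2]
  have A := abs_sin_nat_mul_le k ((θ + φ)/2)
  have B := abs_sin_nat_mul_le k ((θ - φ)/2)
  calc |(-2) * Real.sin (k * ((θ+φ)/2)) * Real.sin (k * ((θ-φ)/2))|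
      = 2 * (|Real.sin (k * ((θ+φ)/2))| * |Real.sin (k * ((θ-φ)/2))|) := by
        rw [abs_mul, abs_mul, abs_neg, abs_two]; ring
    _ ≤ 2 * ((k * |Real.sin ((θ+φ)/2)|) * (k * |Real.sin ((θ-φ)/2)|)) := by
        have hk : (0:ℝ) ≤ k := Nat.cast_nonneg k
        have := mul_le_mul A B (abs_nonneg _) (by positivity)
        linarith
    _ = (k:ℝ)^2 * |(-2) * Real.sin ((θ+φ)/2) * Real.sin ((θ-φ)/2)| := by
        rw [abs_mul, abs_mul, abs_neg, abs_two]; ring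

lemma chebT_lipschitz (k : ℕ) {x y : ℝ} (hx : x ∈ Set.Icc (-1:ℝ) 1) (hy : y ∈ Set.Icc (-1:ℝ) 1) :
    |(Polynomial.Chebyshev.T ℝ k).eval x - (Polynomial.Chebyshev.T ℝ k).eval y|
      ≤ (k:ℝ)^2 * |x - y| := by
  obtain ⟨hx1, hx2⟩ := hx
  obtain ⟨hy1, hy2⟩ := hy
  have ex : x = Real.cos (Real.arccos x) := (Real.cos_arccos hx1 hx2).symm
  have ey : y = Real.cos (Real.arccos y) := (Real.cos_arccos hy1 hy2).symm
  rw [ex, ey, Polynomial.Chebyshev.T_real_cos, Polynomial.Chebyshev.T_real_cos]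
  have := cos_nat_lipschitz k (Real.arccos x) (Real.arccos y)
  push_cast at this ⊢
  exact this

/-- conjugation by an orthogonal matrix as an algebra hom -/
noncomputable def matConjAH {d : ℕ} (U : Matrix (Fin d) (Fin d) ℝ)
    (h1 : U * Uᵀ = 1) (h2 : Uᵀ * U = 1) :
    Matrix (Fin d) (Fin d) ℝ →ₐ[ℝ] Matrix (Fin d) (Fin d) ℝ where
  toFun X := Uᵀ * X * U
  map_one' := by show Uᵀ * 1 * U = 1; rw [mul_one, h2]
  map_mul' X Y := by
    have h : U * (Uᵀ * (Y * U)) = Y * U := by rw [← mul_assoc, h1, one_mul]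
    simp only [mul_assoc, h]
  map_zero' := by simp
  map_add' X Y := by show Uᵀ * (X + Y) * U = _; rw [Matrix.mul_add, Matrix.add_mul]
  commutes' r := by
    simp [Algebra.algebraMap_eq_smul_one, Matrix.mul_smul, Matrix.smul_mul, h2]

lemma conj_aeval {d : ℕ} (U : Matrix (Fin d) (Fin d) ℝ)
    (h1 : U * Uᵀ = 1) (h2 : Uᵀ * U = 1) (A : Matrix (Fin d) (Fin d) ℝ) (p : ℝ[X]) :
    Uᵀ * (aeval A p) * U = aeval (Uᵀ * A * U) p :=
  (aeval_algHom_apply (matConjAH U h1 h2) A p).symm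

lemma aeval_diagonal' {d : ℕ} (v : Fin d → ℝ) (p : ℝ[X]) :
    aeval (Matrix.diagonal v) p = Matrix.diagonal (fun i => p.eval (v i)) := by
  have h := aeval_algHom_apply (Matrix.diagonalAlgHom (n := Fin d) (α := ℝ) ℝ) v p
  simp only [Matrix.diagonalAlgHom_apply] at h
  have hfun : (aeval v) p = fun i => eval (v i) p := by
    funext i
    exact ((aeval_algHom_apply (Pi.evalAlgHom ℝ (fun _ => ℝ) i) v p).symm).trans (by
      simp [coe_aeval_eq_eval])
  rw [h, hfun]

set_option synthInstance.maxHeartbeats 1000000 in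
lemma eig_bound {d : ℕ} (A : Matrix (Fin d) (Fin d) ℝ) (hA : A.IsHermitian)
    (h : specNorm A ≤ 1) (i : Fin d) : hA.eigenvalues i ∈ Set.Icc (-1:ℝ) 1 := by
  set v : EuclideanSpace ℝ (Fin d) := hA.eigenvectorBasis i with hv
  have hnv : ‖v‖ = 1 := hA.eigenvectorBasis.orthonormal.1 i
  have hAv : toEuclideanLin A v = hA.eigenvalues i • v := by
    have h2 := hA.mulVec_eigenvectorBasis i
    rw [toEuclideanLin_apply]
    exact congrArg (WithLp.equiv 2 (Fin d → ℝ)).symm h2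
  have key : |hA.eigenvalues i| ≤ specNorm A := by
    have hle := (LinearMap.toContinuousLinearMap (Matrix.toEuclideanLin A)).le_opNorm v
    rw [LinearMap.coe_toContinuousLinearMap'] at hle
    rw [hAv, norm_smul, hnv, mul_one, Real.norm_eq_abs] at hle
    simpa [specNorm, hnv] using hle
  have := le_trans key h
  rw [abs_le] at this
  exact ⟨this.1, this.2⟩

lemma frobSq_eq_trace {d : ℕ} (A : Matrix (Fin d) (Fin d) ℝ) :
    ∑ i, ∑ j, (A i j) ^ 2 = Matrix.trace (Aᵀ * A) := by
  simp only [Matrix.trace, Matrix.diag, Matrix.mul_apply, Matrix.transpose_apply, pow_two]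
  rw [Finset.sum_comm]

lemma frobSq_conj {d : ℕ} (U V X : Matrix (Fin d) (Fin d) ℝ)
    (hU : U * Uᵀ = 1) (hV : V * Vᵀ = 1) :
    ∑ i, ∑ j, ((Uᵀ * X * V) i j) ^ 2 = ∑ i, ∑ j, (X i j) ^ 2 := by
  have k1 : U * (Uᵀ * (X * V)) = X * V := by rw [← mul_assoc, hU, one_mul]
  have k2 : (X * V) * Vᵀ = X := by rw [mul_assoc, hV, mul_one]
  calc ∑ i, ∑ j, ((Uᵀ * X * V) i j) ^ 2
      = Matrix.trace ((Uᵀ * X * V)ᵀ * (Uᵀ * X * V)) := frobSq_eq_trace _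
    _ = Matrix.trace (Vᵀ * (Xᵀ * (X * V))) := by
        rw [Matrix.transpose_mul, Matrix.transpose_mul, Matrix.transpose_transpose]
        simp only [mul_assoc]
        rw [k1]
    _ = Matrix.trace ((Xᵀ * (X * V)) * Vᵀ) := Matrix.trace_mul_comm _ _
    _ = Matrix.trace (Xᵀ * X) := by rw [mul_assoc, k2]
    _ = ∑ i, ∑ j, (X i j) ^ 2 := (frobSq_eq_trace _).symm

lemma conj_recover {d : ℕ} (U X D : Matrix (Fin d) (Fin d) ℝ) (hU1 : U * Uᵀ = 1)
    (h : Uᵀ * X * U = D) : X = U * D * Uᵀ := by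
  rw [← h]
  simp only [mul_assoc]
  rw [hU1, mul_one, ← mul_assoc, hU1, one_mul]

lemma sandwich {d : ℕ} (U V X Y : Matrix (Fin d) (Fin d) ℝ) (f g : Fin d → ℝ)
    (hU2 : Uᵀ * U = 1) (hV2 : Vᵀ * V = 1)
    (hX : X = U * Matrix.diagonal f * Uᵀ) (hY : Y = V * Matrix.diagonal g * Vᵀ) :
    Uᵀ * (X - Y) * V
      = Matrix.diagonal f * (Uᵀ * V) - (Uᵀ * V) * Matrix.diagonal g := by
  rw [Matrix.mul_sub, Matrix.sub_mul, hX, hY]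
  congr 1
  · simp only [mul_assoc]
    rw [← mul_assoc Uᵀ U, hU2, one_mul]
  · simp only [mul_assoc]
    rw [hV2, mul_one]

lemma aeval_frob_bound {d : ℕ} (A B : Matrix (Fin d) (Fin d) ℝ)
    (hA : A.IsHermitian) (hB : B.IsHermitian) (p : ℝ[X]) (L : ℝ) (hL : 0 ≤ L)
    (hlip : ∀ i j, |p.eval (hA.eigenvalues i) - p.eval (hB.eigenvalues j)|
        ≤ L * |hA.eigenvalues i - hB.eigenvalues j|) :
    frobNorm (aeval A p - aeval B p) ≤ L * frobNorm (A - B) := by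
  classical
  set U : Matrix (Fin d) (Fin d) ℝ := (hA.eigenvectorUnitary : Matrix (Fin d) (Fin d) ℝ) with hUdef
  set V : Matrix (Fin d) (Fin d) ℝ := (hB.eigenvectorUnitary : Matrix (Fin d) (Fin d) ℝ) with hVdef
  have hU1 : U * Uᵀ = 1 := by
    have h := Matrix.mem_unitaryGroup_iff.mp hA.eigenvectorUnitary.2
    rwa [Matrix.star_eq_conjTranspose, Matrix.conjTranspose_eq_transpose_of_trivial] at h
  have hU2 : Uᵀ * U = 1 := by
    have h := Matrix.mem_unitaryGroup_iff'.mp hA.eigenvectorUnitary.2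
    rwa [Matrix.star_eq_conjTranspose, Matrix.conjTranspose_eq_transpose_of_trivial] at h
  have hV1 : V * Vᵀ = 1 := by
    have h := Matrix.mem_unitaryGroup_iff.mp hB.eigenvectorUnitary.2
    rwa [Matrix.star_eq_conjTranspose, Matrix.conjTranspose_eq_transpose_of_trivial] at h
  have hV2 : Vᵀ * V = 1 := by
    have h := Matrix.mem_unitaryGroup_iff'.mp hB.eigenvectorUnitary.2
    rwa [Matrix.star_eq_conjTranspose, Matrix.conjTranspose_eq_transpose_of_trivial] at h
  have dA : Uᵀ * A * U = Matrix.diagonal hA.eigenvalues := by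
    have h := hA.conjStarAlgAut_star_eigenvectorUnitary
    rw [Unitary.conjStarAlgAut_star_apply] at h
    rwa [Matrix.star_eq_conjTranspose, Matrix.conjTranspose_eq_transpose_of_trivial,
      RCLike.ofReal_real_eq_id, Function.id_comp] at h
  have dB : Vᵀ * B * V = Matrix.diagonal hB.eigenvalues := by
    have h := hB.conjStarAlgAut_star_eigenvectorUnitary
    rw [Unitary.conjStarAlgAut_star_apply] at h
    rwa [Matrix.star_eq_conjTranspose, Matrix.conjTranspose_eq_transpose_of_trivial,
      RCLike.ofReal_real_eq_id, Function.id_comp] at h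
  have dpA : Uᵀ * (aeval A p) * U = Matrix.diagonal (fun i => p.eval (hA.eigenvalues i)) := by
    rw [conj_aeval U hU1 hU2, dA, aeval_diagonal']
  have dpB : Vᵀ * (aeval B p) * V = Matrix.diagonal (fun i => p.eval (hB.eigenvalues i)) := by
    rw [conj_aeval V hV1 hV2, dB, aeval_diagonal']
  have M1 := sandwich U V (aeval A p) (aeval B p) _ _ hU2 hV2
    (conj_recover U _ _ hU1 dpA) (conj_recover V _ _ hV1 dpB)
  have M2 := sandwich U V A B _ _ hU2 hV2
    (conj_recover U _ _ hU1 dA) (conj_recover V _ _ hV1 dB)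
  have e1 : ∑ i, ∑ j, ((aeval A p - aeval B p) i j) ^ 2
      = ∑ i, ∑ j, ((p.eval (hA.eigenvalues i) - p.eval (hB.eigenvalues j)) * (Uᵀ * V) i j) ^ 2 := by
    rw [← frobSq_conj U V _ hU1 hV1, M1]
    refine Finset.sum_congr rfl fun i _ => Finset.sum_congr rfl fun j _ => ?_
    simp only [Matrix.sub_apply, Matrix.diagonal_mul, Matrix.mul_diagonal]
    ring
  have e2 : ∑ i, ∑ j, ((A - B) i j) ^ 2
      = ∑ i, ∑ j, ((hA.eigenvalues i - hB.eigenvalues j) * (Uᵀ * V) i j) ^ 2 := by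
    rw [← frobSq_conj U V _ hU1 hV1, M2]
    refine Finset.sum_congr rfl fun i _ => Finset.sum_congr rfl fun j _ => ?_
    simp only [Matrix.sub_apply, Matrix.diagonal_mul, Matrix.mul_diagonal]
    ring
  have step : ∑ i, ∑ j, ((aeval A p - aeval B p) i j) ^ 2
      ≤ L ^ 2 * ∑ i, ∑ j, ((A - B) i j) ^ 2 := by
    rw [e1, e2, Finset.mul_sum]
    refine Finset.sum_le_sum fun i _ => ?_
    rw [Finset.mul_sum]
    refine Finset.sum_le_sum fun j _ => ?_
    have h := hlip i j
    have h2 : (p.eval (hA.eigenvalues i) - p.eval (hB.eigenvalues j)) ^ 2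
        ≤ L ^ 2 * (hA.eigenvalues i - hB.eigenvalues j) ^ 2 := by
      have := pow_le_pow_left₀ (abs_nonneg _) h 2
      rw [sq_abs] at this
      calc (p.eval (hA.eigenvalues i) - p.eval (hB.eigenvalues j)) ^ 2
          ≤ (L * |hA.eigenvalues i - hB.eigenvalues j|) ^ 2 := this
        _ = L ^ 2 * (hA.eigenvalues i - hB.eigenvalues j) ^ 2 := by
            rw [mul_pow, sq_abs]
    calc ((p.eval (hA.eigenvalues i) - p.eval (hB.eigenvalues j)) * (Uᵀ * V) i j) ^ 2
        = (p.eval (hA.eigenvalues i) - p.eval (hB.eigenvalues j)) ^ 2 * ((Uᵀ * V) i j) ^ 2 := by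
          rw [mul_pow]
      _ ≤ (L ^ 2 * (hA.eigenvalues i - hB.eigenvalues j) ^ 2) * ((Uᵀ * V) i j) ^ 2 := by
          exact mul_le_mul_of_nonneg_right h2 (sq_nonneg _)
      _ = L ^ 2 * ((hA.eigenvalues i - hB.eigenvalues j) * (Uᵀ * V) i j) ^ 2 := by
          rw [mul_pow]; ring
  show Real.sqrt _ ≤ L * Real.sqrt _
  calc Real.sqrt (∑ i, ∑ j, ((aeval A p - aeval B p) i j) ^ 2)
      ≤ Real.sqrt (L ^ 2 * ∑ i, ∑ j, ((A - B) i j) ^ 2) := Real.sqrt_le_sqrt step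
    _ = L * Real.sqrt (∑ i, ∑ j, ((A - B) i j) ^ 2) := by
        rw [Real.sqrt_mul (sq_nonneg L), Real.sqrt_sq hL]

/-- If `B` and `B + E` are symmetric with spectral norm at most 1, then
`‖T_k(B+E) − T_k(B)‖_F ≤ k² ‖E‖_F`. -/
theorem cheb_matrix_perturbation {d : ℕ} (B E : Matrix (Fin d) (Fin d) ℝ)
    (hB : B.IsSymm) (hE : E.IsSymm)
    (hBnorm : specNorm B ≤ 1) (hBEnorm : specNorm (B + E) ≤ 1) (k : ℕ) :
    frobNorm (chebT k (B + E) - chebT k B) ≤ (k : ℝ) ^ 2 * frobNorm E := by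
  have hHA : (B + E).IsHermitian := by
    rw [Matrix.IsHermitian, Matrix.conjTranspose_eq_transpose_of_trivial,
      Matrix.transpose_add, hB, hE]
  have hHB : B.IsHermitian := by
    rw [Matrix.IsHermitian, Matrix.conjTranspose_eq_transpose_of_trivial, hB]
  have key := aeval_frob_bound (B + E) B hHA hHB (Polynomial.Chebyshev.T ℝ k)
    ((k : ℝ) ^ 2) (sq_nonneg _)
    (fun i j => chebT_lipschitz k (eig_bound _ hHA hBEnorm i) (eig_bound _ hHB hBnorm j))
  rw [add_sub_cancel_left] at key
  exact key
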